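/- arXiv:1809.06848 — 12 statements merged into one kernel-verified Lean document; each statement's English description precedes it below -/
import Mathlib

section
/- Let a > 0 and let u : ℝ → ℝ be differentiable with u(0) = u₀ > 0 and u'(t) = 2a·u(t)/(1 + exp(u(t))) for all t ≥ 0. Then u is strictly increasing and for all t ≥ 0, u(t) ≤ 2·log(a·t + exp(u₀/2)). -/
open Real Set Filter

lemma key_ineq_stmt1 (y : ℝ) (hy : 0 < y) : y * Real.exp (y/2) ≤ 1 + Real.exp y := by
  have h1 : y/4 + 1 ≤ Real.exp (y/4) := Real.add_one_le_exp (y/4)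
  have h2 : Real.exp (y/2) = Real.exp (y/4) * Real.exp (y/4) := by
    rw [← Real.exp_add]; ring_nf
  have h3 : Real.exp y = Real.exp (y/2) * Real.exp (y/2) := by
    rw [← Real.exp_add]; ring_nf
  have hsq : (y/4 + 1) * (y/4 + 1) ≤ Real.exp (y/4) * Real.exp (y/4) :=
    mul_le_mul h1 h1 (by positivity) (Real.exp_pos _).le
  have hw : y ≤ Real.exp (y/2) := by nlinarith [sq_nonneg (1 - y/4)]
  have := mul_le_mul_of_nonneg_right hw (Real.exp_pos (y/2)).le
  linarith

/-- The logit of a ReLU network trained with cross-entropy (degenerate case) is strictly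
increasing and grows at most logarithmically. -/
theorem stmt_1 (a : ℝ) (ha : 0 < a) (u : ℝ → ℝ) (u₀ : ℝ) (hu₀ : u 0 = u₀) (hpos : 0 < u₀)
    (hode : ∀ t ≥ (0:ℝ), HasDerivAt u (2 * a * u t / (1 + Real.exp (u t))) t) :
    StrictMonoOn u (Set.Ici 0) ∧
      ∀ t ≥ (0:ℝ), u t ≤ 2 * Real.log (a * t + Real.exp (u₀ / 2)) := by
  have hcont : ∀ t ≥ (0:ℝ), ContinuousAt u t := fun t ht => (hode t ht).continuousAt
  have hcontOn : ContinuousOn u (Ici 0) := fun t ht => (hcont t ht).continuousWithinAt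
  -- positivity of u on Ici 0
  have hpos_all : ∀ t ≥ (0:ℝ), 0 < u t := by
    by_contra h
    push_neg at h
    obtain ⟨t₀, ht₀, hu⟩ := h
    set S : Set ℝ := {t | 0 ≤ t ∧ u t ≤ 0} with hS
    have hne : S.Nonempty := ⟨t₀, ht₀, hu⟩
    have hbdd : BddBelow S := ⟨0, fun x hx => hx.1⟩
    have hclosed : IsClosed S := by
      apply IsSeqClosed.isClosed
      intro x p hx hp
      have h0 : (0:ℝ) ≤ p :=
        le_of_tendsto_of_tendsto' tendsto_const_nhds hp (fun n => (hx n).1)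
      refine ⟨h0, ?_⟩
      have hup : Tendsto (u ∘ x) atTop (nhds (u p)) := (hcont p h0).tendsto.comp hp
      exact le_of_tendsto hup (Eventually.of_forall fun n => (hx n).2)
    set T := sInf S with hT
    have hTS : T ∈ S := hclosed.csInf_mem hne hbdd
    have hT0 : (0:ℝ) ≤ T := hTS.1
    have hTpos : 0 < T := by
      rcases hT0.lt_or_eq with h | h
      · exact h
      · exfalso
        have := hTS.2
        rw [← h, hu₀] at this
        linarith
    have hposlt : ∀ t, 0 ≤ t → t < T → 0 < u t := by
      intro t ht htT
      by_contra hh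
      push_neg at hh
      exact absurd (csInf_le hbdd ⟨ht, hh⟩) (not_le.mpr htT)
    have hmono : MonotoneOn u (Icc 0 T) := by
      apply monotoneOn_of_deriv_nonneg (convex_Icc 0 T)
        (hcontOn.mono Icc_subset_Ici_self)
      · intro t ht
        rw [interior_Icc] at ht
        exact (hode t ht.1.le).differentiableAt.differentiableWithinAt
      · intro t ht
        rw [interior_Icc] at ht
        rw [(hode t ht.1.le).deriv]
        have h1 : 0 < u t := hposlt t ht.1.le ht.2
        have h2 : 0 < Real.exp (u t) := Real.exp_pos _
        positivity
    have hle := hmono ⟨le_refl 0, hT0⟩ ⟨hT0, le_refl T⟩ hT0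
    rw [hu₀] at hle
    linarith [hTS.2]
  -- strict monotonicity
  have hsm : StrictMonoOn u (Ici 0) := by
    apply strictMonoOn_of_deriv_pos (convex_Ici 0) hcontOn
    intro t ht
    rw [interior_Ici] at ht
    rw [(hode t ht.le).deriv]
    have h1 := hpos_all t ht.le
    have h2 : 0 < Real.exp (u t) := Real.exp_pos _
    positivity
  refine ⟨hsm, fun t ht => ?_⟩
  set C := Real.exp (u₀ / 2) with hC
  set g : ℝ → ℝ := fun s => a * s + C - Real.exp (u s / 2) with hg
  have hderiv : ∀ s ≥ (0:ℝ), HasDerivAt g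
      (a - Real.exp (u s / 2) * (2 * a * u s / (1 + Real.exp (u s)) / 2)) s := by
    intro s hs
    have h1 : HasDerivAt (fun s => u s / 2)
        (2 * a * u s / (1 + Real.exp (u s)) / 2) s := (hode s hs).div_const 2
    have h2 := h1.exp
    have h3 : HasDerivAt (fun s => a * s + C) a s := by
      simpa using ((hasDerivAt_id s).const_mul a).add_const C
    exact h3.sub h2
  have hmono2 : MonotoneOn g (Ici 0) := by
    apply monotoneOn_of_deriv_nonneg (convex_Ici 0)
    · apply ContinuousOn.sub
      · exact ((continuous_const.mul continuous_id).add continuous_const).continuousOn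
      · exact Real.continuous_exp.comp_continuousOn (hcontOn.div_const 2)
    · intro s hs
      rw [interior_Ici] at hs
      exact (hderiv s hs.le).differentiableAt.differentiableWithinAt
    · intro s hs
      rw [interior_Ici] at hs
      rw [(hderiv s hs.le).deriv]
      have hu := hpos_all s hs.le
      have hkey := key_ineq_stmt1 (u s) hu
      have hd : 0 < 1 + Real.exp (u s) := by positivity
      rw [sub_nonneg]
      have heq : Real.exp (u s / 2) * (2 * a * u s / (1 + Real.exp (u s)) / 2)
          = a * (u s * Real.exp (u s / 2)) / (1 + Real.exp (u s)) := by
        field_simp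
      rw [heq, div_le_iff₀ hd]
      nlinarith [mul_le_mul_of_nonneg_left hkey ha.le]
  have h0t := hmono2 (self_mem_Ici) (mem_Ici.mpr ht) ht
  have hg0 : g 0 = 0 := by simp [hg, hu₀, hC]
  rw [hg0] at h0t
  have hexp : Real.exp (u t / 2) ≤ a * t + C := by
    simp only [hg] at h0t; linarith
  have hlog : u t / 2 ≤ Real.log (a * t + C) := by
    have := Real.log_le_log (Real.exp_pos (u t / 2)) hexp
    rwa [Real.log_exp] at this
  linarith
end

section
/- Let a > 0 and let u : ℝ → ℝ be differentiable with u(0) = u₀ > 0 and u'(t) = 2a·u(t)/(1 + exp(u(t))) for all t ≥ 0. Then for all t ≥ 0, u(t) ≥ u₀ and u(t) tends to +∞ as t → ∞. -/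
/-- The logit under cross-entropy gradient flow (degenerate case) stays above its
initial value and diverges to `+∞`. -/
theorem stmt_3 (a : ℝ) (ha : 0 < a) (u : ℝ → ℝ) (u₀ : ℝ) (hu₀ : u 0 = u₀) (hpos : 0 < u₀)
    (hode : ∀ t ≥ (0:ℝ), HasDerivAt u (2 * a * u t / (1 + Real.exp (u t))) t) :
    (∀ t ≥ (0:ℝ), u t ≥ u₀) ∧ Filter.Tendsto u Filter.atTop Filter.atTop := by
  have hcont : ContinuousOn u (Set.Ici 0) := fun t ht =>
    ((hode t ht).continuousAt).continuousWithinAt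
  -- Step 1: u stays positive on [0, ∞)
  have hpos' : ∀ t ≥ (0:ℝ), 0 < u t := by
    by_contra h
    push_neg at h
    obtain ⟨T₀, hT₀, hT₀le⟩ := h
    set B : Set ℝ := {t | 0 ≤ t ∧ u t ≤ 0} with hB
    have hBne : B.Nonempty := ⟨T₀, hT₀, hT₀le⟩
    have hBbd : BddBelow B := ⟨0, fun x hx => hx.1⟩
    set T := sInf B with hTdef
    have hT0 : 0 ≤ T := le_csInf hBne fun x hx => hx.1
    have hlt : ∀ s, 0 ≤ s → s < T → 0 < u s := by
      intro s hs hsT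
      by_contra hle
      push_neg at hle
      exact absurd (csInf_le hBbd ⟨hs, hle⟩) (not_le.2 hsT)
    have huT : u T ≤ 0 := by
      by_contra hTpos
      push_neg at hTpos
      have hca : ContinuousAt u T := (hode T hT0).continuousAt
      obtain ⟨ε, hε, hball⟩ := Metric.continuousAt_iff.1 hca (u T) hTpos
      obtain ⟨b, hbB, hbT⟩ := exists_lt_of_csInf_lt hBne
        (lt_add_of_pos_right T hε : T < T + ε)
      have hTb : T ≤ b := csInf_le hBbd hbB
      have hdist : dist b T < ε := by
        rw [Real.dist_eq, abs_of_nonneg (by linarith)]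
        linarith
      have := hball hdist
      rw [Real.dist_eq, abs_lt] at this
      have : 0 < u b := by linarith [this.1]
      linarith [hbB.2]
    have hTne : 0 < T := by
      rcases lt_or_eq_of_le hT0 with h | h
      · exact h
      · exfalso; rw [← h] at huT; rw [hu₀] at huT; linarith
    have hmono : StrictMonoOn u (Set.Icc 0 T) := by
      apply strictMonoOn_of_deriv_pos (convex_Icc 0 T)
        (hcont.mono (Set.Icc_subset_Ici_self))
      intro x hx
      rw [interior_Icc] at hx
      have hux : 0 < u x := hlt x hx.1.le hx.2
      rw [(hode x hx.1.le).deriv]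
      positivity
    have h01 : (0:ℝ) ∈ Set.Icc 0 T := ⟨le_rfl, hT0⟩
    have h02 : T ∈ Set.Icc 0 T := ⟨hT0, le_rfl⟩
    have := hmono h01 h02 hTne
    rw [hu₀] at this
    linarith
  -- Step 2: strict monotonicity on [0, ∞)
  have hmono2 : StrictMonoOn u (Set.Ici 0) := by
    apply strictMonoOn_of_deriv_pos (convex_Ici 0) hcont
    intro x hx
    rw [interior_Ici] at hx
    have hux : 0 < u x := hpos' x hx.le
    rw [(hode x hx.le).deriv]
    positivity
  have hge : ∀ t ≥ (0:ℝ), u t ≥ u₀ := by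
    intro t ht
    rcases eq_or_lt_of_le ht with h | h
    · rw [← h, hu₀]
    · rw [← hu₀]
      exact (hmono2 (Set.self_mem_Ici) (Set.mem_Ici.2 ht) h).le
  refine ⟨hge, ?_⟩
  -- Step 3: unboundedness
  have hub : ∀ M : ℝ, ∃ t ≥ (0:ℝ), M ≤ u t := by
    by_contra h
    push_neg at h
    obtain ⟨M, hM⟩ := h
    have hM0 : u₀ < M := by have := hM 0 le_rfl; rw [hu₀] at this; exact this
    set δ := 2 * a * u₀ / (1 + Real.exp M) with hδ
    have hδpos : 0 < δ := by positivity
    have hderiv_ge : ∀ t ≥ (0:ℝ), δ ≤ 2 * a * u t / (1 + Real.exp (u t)) := by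
      intro t ht
      have hut : 0 < u t := hpos' t ht
      have hut₀ : u₀ ≤ u t := hge t ht
      have hexp : Real.exp (u t) ≤ Real.exp M := Real.exp_le_exp.2 (hM t ht).le
      apply div_le_div₀ (by positivity) (by nlinarith) (by positivity) (by linarith)
    set g : ℝ → ℝ := fun t => u t - δ * t with hg
    have hgmono : MonotoneOn g (Set.Ici 0) := by
      apply monotoneOn_of_deriv_nonneg (convex_Ici 0)
      · exact hcont.sub (continuous_const.mul continuous_id).continuousOn
      · intro x hx
        rw [interior_Ici] at hx
        exact ((hode x hx.le).sub
          (by simpa using (hasDerivAt_id x).const_mul δ)).differentiableAt.differentiableWithinAt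
      · intro x hx
        rw [interior_Ici] at hx
        have hd : HasDerivAt g (2 * a * u x / (1 + Real.exp (u x)) - δ) x :=
          (hode x hx.le).sub (by simpa using (hasDerivAt_id x).const_mul δ)
        rw [hd.deriv]
        linarith [hderiv_ge x hx.le]
    have htM : (0:ℝ) ≤ M / δ := div_nonneg (by linarith) hδpos.le
    have hmem : M / δ ∈ Set.Ici (0:ℝ) := Set.mem_Ici.2 htM
    have h2 := hgmono Set.self_mem_Ici hmem htM
    have hMδ : δ * (M / δ) = M := by field_simp
    simp only [hg, hu₀, mul_zero, sub_zero] at h2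
    have := hM (M / δ) htM
    linarith
  rw [Filter.tendsto_atTop]
  intro b
  obtain ⟨t₀, ht₀, hbt₀⟩ := hub b
  filter_upwards [Filter.eventually_ge_atTop t₀] with s hs
  exact hbt₀.trans (hmono2.monotoneOn (Set.mem_Ici.2 ht₀) (Set.mem_Ici.2 (ht₀.trans hs)) hs)
end

section
/- Let a > 0 and let u : ℝ → ℝ be differentiable with u(0) = u₀ < 0 and u'(t) = −2a·u(t)/(1 + exp(u(t))) for all t ≥ 0. Then u is strictly increasing, u(t) < 0 for all t ≥ 0, and u(t) → 0 as t → ∞. -/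
/-- Top-left quadrant initialization: the negative logit strictly increases, stays
negative, and converges to `0` without ever reaching it. -/
theorem stmt_4 (a : ℝ) (ha : 0 < a) (u : ℝ → ℝ) (u₀ : ℝ) (hu₀ : u 0 = u₀) (hneg : u₀ < 0)
    (hode : ∀ t ≥ (0:ℝ), HasDerivAt u (-(2 * a * u t) / (1 + Real.exp (u t))) t) :
    StrictMonoOn u (Set.Ici 0) ∧ (∀ t ≥ (0:ℝ), u t < 0) ∧
      Filter.Tendsto u Filter.atTop (nhds 0) := by
  have hcont : ContinuousOn u (Set.Ici 0) := fun t ht =>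
    ((hode t ht).continuousAt).continuousWithinAt
  -- Part 1: u stays negative
  have hneg' : ∀ t ≥ (0:ℝ), u t < 0 := by
    by_contra hc
    push_neg at hc
    obtain ⟨t₂, ht₂, hu₂⟩ := hc
    have hcont2 : ContinuousOn u (Set.Icc 0 t₂) :=
      hcont.mono Set.Icc_subset_Ici_self
    set K : Set ℝ := {t | t ∈ Set.Icc (0:ℝ) t₂ ∧ u t = 0} with hK
    have hKsub : K ⊆ Set.Icc 0 t₂ := fun t ht => ht.1
    have hKne : K.Nonempty := by
      have hiv := intermediate_value_Icc ht₂ hcont2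
      have h0mem : (0:ℝ) ∈ Set.Icc (u 0) (u t₂) := ⟨hu₀ ▸ hneg.le, hu₂⟩
      obtain ⟨t₁, ht₁, h0⟩ := hiv h0mem
      exact ⟨t₁, ht₁, h0⟩
    have hKclosed : IsClosed K := by
      have : K = Set.Icc 0 t₂ ∩ u ⁻¹' {0} := by
        ext t
        simp only [hK, Set.mem_setOf_eq, Set.mem_inter_iff, Set.mem_preimage,
          Set.mem_singleton_iff]
      rw [this]
      exact hcont2.preimage_isClosed_of_isClosed isClosed_Icc isClosed_singleton
    have hKbdd : BddBelow K := ⟨0, fun t ht => (hKsub ht).1⟩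
    set t₁ := sInf K with ht₁def
    have ht₁K : t₁ ∈ K := hKclosed.csInf_mem hKne hKbdd
    have ht₁0 : 0 ≤ t₁ := (hKsub ht₁K).1
    have hut₁ : u t₁ = 0 := ht₁K.2
    -- u ≤ 0 on [0, t₁]
    have hle0 : ∀ t ∈ Set.Icc (0:ℝ) t₁, u t ≤ 0 := by
      intro t ht
      by_contra hpos
      push_neg at hpos
      have ht0 : 0 ≤ t := ht.1
      have hcont3 : ContinuousOn u (Set.Icc 0 t) :=
        hcont.mono Set.Icc_subset_Ici_self
      have hiv := intermediate_value_Icc ht0 hcont3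
      have h0mem : (0:ℝ) ∈ Set.Icc (u 0) (u t) := ⟨hu₀ ▸ hneg.le, hpos.le⟩
      obtain ⟨s, hs, hus⟩ := hiv h0mem
      have hsK : s ∈ K := ⟨⟨hs.1, hs.2.trans (ht.2.trans (hKsub ht₁K).2)⟩, hus⟩
      have : t₁ ≤ s := csInf_le hKbdd hsK
      -- then s = t₁, so u t₁ > 0? no: u s = 0 and s ≤ t ≤ t₁ ≤ s, so t = t₁, u t = 0
      have hst : s = t₁ := le_antisymm (hs.2.trans ht.2) this
      have htt : t = t₁ := le_antisymm ht.2 (hst ▸ hs.2)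
      rw [htt, hut₁] at hpos
      exact lt_irrefl 0 hpos
    -- auxiliary function h
    set E : ℝ → ℝ := fun t => Real.exp (2 * a * t) with hEdef
    have hEderiv : ∀ t : ℝ, HasDerivAt E (E t * (2 * a)) t := by
      intro t
      have h1 : HasDerivAt (fun t : ℝ => 2 * a * t) (2 * a) t := by
        simpa using (hasDerivAt_id t).const_mul (2 * a)
      exact (Real.hasDerivAt_exp (2 * a * t)).comp t h1
    set h : ℝ → ℝ := fun t => u t * E t with hhdef
    have hhderiv : ∀ t ≥ (0:ℝ), HasDerivAt h
        (-(2 * a * u t) / (1 + Real.exp (u t)) * E t + u t * (E t * (2 * a))) t :=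
      fun t ht => (hode t ht).mul (hEderiv t)
    have hanti : AntitoneOn h (Set.Icc 0 t₁) := by
      apply antitoneOn_of_deriv_nonpos (convex_Icc 0 t₁)
      · exact fun t ht => ((hhderiv t ht.1).continuousAt).continuousWithinAt
      · intro x hx
        rw [interior_Icc] at hx
        exact ((hhderiv x hx.1.le).differentiableAt).differentiableWithinAt
      · intro x hx
        rw [interior_Icc] at hx
        rw [(hhderiv x hx.1.le).deriv]
        have hux : u x ≤ 0 := hle0 x ⟨hx.1.le, hx.2.le⟩
        have hEpos : 0 < E x := Real.exp_pos _
        have hd : (1:ℝ) ≤ 1 + Real.exp (u x) := by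
          have := Real.exp_pos (u x); linarith
        have hNnn : 0 ≤ -(2 * a * u x) := by nlinarith
        have hdivle : -(2 * a * u x) / (1 + Real.exp (u x)) ≤ -(2 * a * u x) :=
          div_le_self hNnn hd
        nlinarith [mul_le_mul_of_nonneg_right hdivle hEpos.le]
    have h1 : h t₁ ≤ h 0 := hanti (Set.mem_Icc.mpr ⟨le_refl 0, ht₁0⟩) (Set.mem_Icc.mpr ⟨ht₁0, le_refl t₁⟩) ht₁0
    have h0val : h 0 = u₀ := by simp [hhdef, hEdef, hu₀]
    have ht₁val : h t₁ = 0 := by simp [hhdef, hut₁]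
    rw [h0val, ht₁val] at h1
    linarith
  -- Part 2: strict monotonicity
  have hmono : StrictMonoOn u (Set.Ici 0) := by
    apply strictMonoOn_of_deriv_pos (convex_Ici 0) hcont
    intro x hx
    rw [interior_Ici] at hx
    rw [(hode x hx.le).deriv]
    have hux := hneg' x hx.le
    have hd : 0 < 1 + Real.exp (u x) := by positivity
    apply div_pos _ hd
    nlinarith
  refine ⟨hmono, hneg', ?_⟩
  -- Part 3: convergence
  have hne : (u '' Set.Ici 0).Nonempty := ⟨u 0, 0, Set.self_mem_Ici, rfl⟩
  have hbdd : BddAbove (u '' Set.Ici 0) := by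
    refine ⟨0, fun y hy => ?_⟩
    obtain ⟨t, ht, rfl⟩ := hy
    exact (hneg' t ht).le
  set L := sSup (u '' Set.Ici 0) with hLdef
  have hL0 : L ≤ 0 := by
    apply csSup_le hne
    rintro y ⟨t, ht, rfl⟩
    exact (hneg' t ht).le
  have hle : ∀ t ≥ (0:ℝ), u t ≤ L := fun t ht => le_csSup hbdd ⟨t, ht, rfl⟩
  have hLeq : L = 0 := by
    by_contra hneL
    have hL : L < 0 := lt_of_le_of_ne hL0 hneL
    set g : ℝ → ℝ := fun t => u t + a * L * t with hgdef
    have hgderiv : ∀ t ≥ (0:ℝ), HasDerivAt g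
        (-(2 * a * u t) / (1 + Real.exp (u t)) + a * L) t := by
      intro t ht
      have h2 : HasDerivAt (fun t : ℝ => a * L * t) (a * L) t := by
        simpa using (hasDerivAt_id t).const_mul (a * L)
      exact (hode t ht).add h2
    have hgmono : MonotoneOn g (Set.Ici 0) := by
      apply monotoneOn_of_deriv_nonneg (convex_Ici 0)
      · exact fun t ht => ((hgderiv t ht).continuousAt).continuousWithinAt
      · intro x hx
        rw [interior_Ici] at hx
        exact ((hgderiv x hx.le).differentiableAt).differentiableWithinAt
      · intro x hx
        rw [interior_Ici] at hx
        rw [(hgderiv x hx.le).deriv]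
        have hux : u x ≤ L := hle x hx.le
        have hexp : Real.exp (u x) < 1 := by
          rw [Real.exp_lt_one_iff]
          exact hneg' x hx.le
        have hd1 : 0 < 1 + Real.exp (u x) := by positivity
        have hd2 : 1 + Real.exp (u x) < 2 := by linarith
        have hN : 0 < -(2 * a * L) := by nlinarith
        have hN2 : -(2 * a * L) ≤ -(2 * a * u x) := by nlinarith
        have key : -(2 * a * L) / 2 ≤ -(2 * a * u x) / (1 + Real.exp (u x)) :=
          div_le_div₀ (by nlinarith) hN2 hd1 hd2.le
        nlinarith [key]
    -- at time T := u₀ / (a * L), we get u T ≥ 0, contradiction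
    set T : ℝ := u₀ / (a * L) with hTdef
    have haL : a * L < 0 := by nlinarith
    have hT0 : 0 < T := div_pos_of_neg_of_neg hneg haL
    have := hgmono (Set.self_mem_Ici) (Set.mem_Ici.mpr hT0.le) hT0.le
    have hgT : g 0 = u₀ := by simp [hgdef, hu₀]
    have haLT : a * L * T = u₀ := by
      rw [hTdef]; field_simp
    have huT : 0 ≤ u T := by
      have : u₀ ≤ u T + a * L * T := by rw [← hgT]; exact this
      rw [haLT] at this; linarith
    exact absurd huT (not_le.mpr (hneg' T hT0.le))
  -- now the limit
  rw [Metric.tendsto_atTop]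
  intro ε hε
  have hlt : L - ε < L := by linarith
  obtain ⟨y, hy, hylt⟩ := exists_lt_of_lt_csSup hne hlt
  obtain ⟨t₀, ht₀, rfl⟩ := hy
  refine ⟨t₀, fun n hn => ?_⟩
  have hn0 : (0:ℝ) ≤ n := le_trans ht₀ hn
  have h1 : u t₀ ≤ u n := hmono.monotoneOn ht₀ hn0 hn
  have h2 : u n < 0 := hneg' n hn0
  rw [Real.dist_eq, abs_sub_lt_iff]
  constructor <;> [linarith; (rw [hLeq] at hylt; linarith)]
end

section
/- Let a > 0, u₀ < u_f < 0, and let u : ℝ → ℝ satisfy u(0) = u₀ and u'(t) = −2a·u(t)/(1 + exp(u(t))) for t ≥ 0. If t* is a time with u(t*) = u_f, then t* ≥ (1/(2a))·(log(−u₀) − log(−u_f)). -/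
/-- Quantitative frozen-learning regime: the time to move the negative logit from
`u₀` to `u_f` is at least `(1/(2a))·(log(−u₀) − log(−u_f))`. -/
theorem stmt_5 (a : ℝ) (ha : 0 < a) (u₀ uf : ℝ) (h0 : u₀ < uf) (hf : uf < 0)
    (u : ℝ → ℝ) (hu₀ : u 0 = u₀)
    (hode : ∀ t ≥ (0:ℝ), HasDerivAt u (-(2 * a * u t) / (1 + Real.exp (u t))) t)
    (tstar : ℝ) (htstar : 0 ≤ tstar) (hreach : u tstar = uf) :
    tstar ≥ (1 / (2 * a)) * (Real.log (-u₀) - Real.log (-uf)) := by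
  -- time-reversed function v s = u (tstar - s)
  set v : ℝ → ℝ := fun s => u (tstar - s) with hv
  set v' : ℝ → ℝ := fun s => -(-(2 * a * v s) / (1 + Real.exp (v s))) with hv'
  have hderiv : ∀ s ∈ Set.Ico (0:ℝ) tstar, HasDerivAt v (v' s) s := by
    intro s hs
    have hts : tstar - s ≥ 0 := by
      have := hs.2; linarith [hs.1]
    have h1 : HasDerivAt (fun s : ℝ => tstar - s) (-1) s := by
      simpa using (hasDerivAt_id s).const_sub tstar
    have := (hode (tstar - s) hts).comp s h1
    simpa [hv, hv', mul_comm, neg_div, Function.comp_def] using this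
  have hcont : ContinuousOn v (Set.Icc 0 tstar) := by
    intro s hs
    rcases eq_or_lt_of_le hs.2 with h | h
    · -- s = tstar : v is continuous at s since u is differentiable at 0
      have : HasDerivAt u (-(2 * a * u 0) / (1 + Real.exp (u 0))) 0 := hode 0 le_rfl
      have hcu : ContinuousAt u 0 := this.continuousAt
      have hc : ContinuousAt v s := by
        apply ContinuousAt.comp (x := s)
        · simpa [hv, h] using hcu
        · exact (continuous_const.sub continuous_id).continuousAt
      exact hc.continuousWithinAt
    · exact ((hderiv s ⟨hs.1, h⟩).continuousAt).continuousWithinAt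
  have hbound : ∀ s ∈ Set.Ico (0:ℝ) tstar, ‖v' s‖ ≤ (2*a) * ‖v s‖ + 0 := by
    intro s _
    have hpos : (0:ℝ) < 1 + Real.exp (v s) := by positivity
    have : ‖v' s‖ = (2*a) * |v s| / (1 + Real.exp (v s)) := by
      rw [hv']
      rw [Real.norm_eq_abs, abs_neg, abs_div, abs_of_pos hpos, abs_neg, abs_mul,
        abs_of_pos (by linarith : (0:ℝ) < 2*a)]
    rw [this, add_zero, Real.norm_eq_abs, div_le_iff₀ hpos]
    have h1 : (0:ℝ) < Real.exp (v s) := Real.exp_pos _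
    have h2 : 0 ≤ (2*a) * |v s| := by positivity
    nlinarith
  have key := norm_le_gronwallBound_of_norm_deriv_right_le hcont
    (fun s hs => (hderiv s hs).hasDerivWithinAt) (le_refl ‖v 0‖) hbound
    tstar ⟨htstar, le_rfl⟩
  rw [gronwallBound_ε0] at key
  have hv0 : v 0 = uf := by simp [hv, hreach]
  have hvt : v tstar = u₀ := by simp [hv, hu₀]
  rw [hv0, hvt, sub_zero, Real.norm_eq_abs, Real.norm_eq_abs,
    abs_of_neg (by linarith : u₀ < 0), abs_of_neg hf] at key
  -- key : -u₀ ≤ -uf * exp (2a * tstar)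
  have hlog : Real.log (-u₀) ≤ Real.log (-uf) + 2*a*tstar := by
    have := Real.log_le_log (by linarith : (0:ℝ) < -u₀) key
    rwa [Real.log_mul (by linarith) (Real.exp_ne_zero _), Real.log_exp] at this
  rw [ge_iff_le, one_div, inv_mul_le_iff₀ (by linarith : (0:ℝ) < 2*a)]
  linarith
end

section
/- Let a > 0 and let y, z : ℝ → ℝ be differentiable with y'(t) = a²·z(t) and z'(t) = y(t) for all t, with initial conditions satisfying y(0) = a·z(0) > 0. Then u(t) := y(t)·z(t) satisfies u(t) = u(0)·exp(2a·t) for all t ≥ 0. -/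
/-- Hinge-loss dynamics, degenerate case: the logit grows exactly exponentially. -/
theorem stmt_6 (a : ℝ) (ha : 0 < a) (y z : ℝ → ℝ)
    (hy : ∀ t : ℝ, HasDerivAt y (a ^ 2 * z t) t)
    (hz : ∀ t : ℝ, HasDerivAt z (y t) t)
    (hinit : y 0 = a * z 0) (hpos : 0 < y 0) :
    ∀ t ≥ (0:ℝ), y t * z t = (y 0 * z 0) * Real.exp (2 * a * t) := by
  -- Step 1: g t = (y t - a * z t) * exp (a * t) is constant (derivative 0), so y = a z.
  have hg : ∀ t : ℝ, HasDerivAt (fun t => (y t - a * z t) * Real.exp (a * t)) 0 t := by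
    intro t
    have h1 : HasDerivAt (fun t => y t - a * z t) (a ^ 2 * z t - a * y t) t :=
      (hy t).sub ((hz t).const_mul a)
    have h2 : HasDerivAt (fun t => Real.exp (a * t)) (a * Real.exp (a * t)) t := by
      simpa [mul_comm, Function.comp_def] using (Real.hasDerivAt_exp (a * t)).comp t
        ((hasDerivAt_id t).const_mul a)
    have := h1.mul h2
    refine this.congr_deriv ?_
    ring
  have hyz : ∀ t : ℝ, y t = a * z t := by
    intro t
    have hc : (fun t => (y t - a * z t) * Real.exp (a * t)) t =
        (fun t => (y t - a * z t) * Real.exp (a * t)) 0 :=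
      is_const_of_deriv_eq_zero (fun x => (hg x).differentiableAt)
        (fun x => (hg x).deriv) t 0
    simp only [hinit, sub_self, zero_mul] at hc
    have he : Real.exp (a * t) ≠ 0 := (Real.exp_pos _).ne'
    have := mul_eq_zero.mp hc
    rcases this with h | h
    · linarith [sub_eq_zero.mp h]
    · exact absurd h he
  -- Step 2: h t = z t * exp (-(a * t)) is constant, so z t = z 0 * exp (a t).
  have hh : ∀ t : ℝ, HasDerivAt (fun t => z t * Real.exp (-(a * t))) 0 t := by
    intro t
    have h2 : HasDerivAt (fun t => Real.exp (-(a * t))) (-a * Real.exp (-(a * t))) t := by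
      simpa [mul_comm, Function.comp_def] using (Real.hasDerivAt_exp (-(a * t))).comp t
        (((hasDerivAt_id t).const_mul a).neg)
    have := (hz t).mul h2
    refine this.congr_deriv ?_
    rw [hyz t]; ring
  have hzval : ∀ t : ℝ, z t = z 0 * Real.exp (a * t) := by
    intro t
    have hc : (fun t => z t * Real.exp (-(a * t))) t =
        (fun t => z t * Real.exp (-(a * t))) 0 :=
      is_const_of_deriv_eq_zero (fun x => (hh x).differentiableAt)
        (fun x => (hh x).deriv) t 0
    simp only [mul_zero, neg_zero, Real.exp_zero, mul_one] at hc
    have : z t = z 0 * Real.exp (a * t) := by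
      have he : Real.exp (-(a * t)) ≠ 0 := (Real.exp_pos _).ne'
      rw [← hc, mul_assoc, ← Real.exp_add]
      simp
    exact this
  intro t _
  rw [hyz t, hzval t, hinit]
  rw [show 2 * a * t = a * t + a * t by ring, Real.exp_add]
  ring
end

section
/- Let a > 0 and let y, z : ℝ → ℝ be differentiable with y'(t) = a²·z(t) and z'(t) = y(t), and suppose c := y(0)² − a²·z(0)² > 0 with y(0) > 0. Then for all t ≥ 0, y(t) = √c·cosh(θ₀/2 + a·t) and z(t) = (√c/a)·sinh(θ₀/2 + a·t), where θ₀ is the unique real number with √c·cosh(θ₀/2) = y(0) and (√c/a)·sinh(θ₀/2) = z(0). Consequently u(t) := y(t)·z(t) = (c/(2a))·sinh(θ₀ + 2a·t). -/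
/-- If `f' = k f` and `f 0 = 0`, then `f = 0`. -/
lemma ode_zero (k : ℝ) (f : ℝ → ℝ) (hf : ∀ t, HasDerivAt f (k * f t) t)
    (h0 : f 0 = 0) : ∀ t, f t = 0 := by
  intro t
  set g : ℝ → ℝ := fun t => f t * Real.exp (-k * t) with hg
  have hg' : ∀ t, HasDerivAt g 0 t := by
    intro t
    have he : HasDerivAt (fun t => Real.exp (-k * t)) (-k * Real.exp (-k * t)) t := by
      simpa [mul_comm] using (HasDerivAt.exp ((hasDerivAt_id t).const_mul (-k)))
    have := (hf t).mul he
    refine this.congr_deriv ?_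
    ring
  have hconst : g t = g 0 := by
    have hdiff : Differentiable ℝ g := fun x => (hg' x).differentiableAt
    have hderiv : ∀ x, deriv g x = 0 := fun x => (hg' x).deriv
    exact is_const_of_deriv_eq_zero hdiff hderiv t 0
  have : g 0 = 0 := by simp [hg, h0]
  have hgt : f t * Real.exp (-k * t) = 0 := by
    have := hconst.trans this
    simpa [hg] using this
  have hexp : Real.exp (-k * t) ≠ 0 := Real.exp_ne_zero _
  exact (mul_eq_zero.mp hgt).resolve_right hexp

/-- Hinge-loss dynamics, non-degenerate hyperbolic case: closed-form solution via
hyperbolic functions. -/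
theorem stmt_7 (a : ℝ) (ha : 0 < a) (y z : ℝ → ℝ)
    (hy : ∀ t : ℝ, HasDerivAt y (a ^ 2 * z t) t)
    (hz : ∀ t : ℝ, HasDerivAt z (y t) t)
    (c : ℝ) (hc : c = y 0 ^ 2 - a ^ 2 * z 0 ^ 2) (hcpos : 0 < c) (hy0 : 0 < y 0)
    (θ₀ : ℝ) (hθy : Real.sqrt c * Real.cosh (θ₀ / 2) = y 0)
    (hθz : Real.sqrt c / a * Real.sinh (θ₀ / 2) = z 0) :
    ∀ t ≥ (0:ℝ),
      y t = Real.sqrt c * Real.cosh (θ₀ / 2 + a * t) ∧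
      z t = Real.sqrt c / a * Real.sinh (θ₀ / 2 + a * t) ∧
      y t * z t = c / (2 * a) * Real.sinh (θ₀ + 2 * a * t) := by
  have ha' : a ≠ 0 := ne_of_gt ha
  set s : ℝ := Real.sqrt c with hs
  have hsc : s ^ 2 = c := Real.sq_sqrt hcpos.le
  -- the explicit solutions
  set Y : ℝ → ℝ := fun t => s * Real.cosh (θ₀ / 2 + a * t) with hY
  set Z : ℝ → ℝ := fun t => s / a * Real.sinh (θ₀ / 2 + a * t) with hZ
  have harg : ∀ t : ℝ, HasDerivAt (fun t => θ₀ / 2 + a * t) a t := by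
    intro t
    simpa using ((hasDerivAt_id t).const_mul a).const_add (θ₀ / 2)
  have hYd : ∀ t, HasDerivAt Y (a ^ 2 * Z t) t := by
    intro t
    have := ((harg t).cosh).const_mul s
    refine this.congr_deriv ?_
    simp only [hZ]
    field_simp
  have hZd : ∀ t, HasDerivAt Z (Y t) t := by
    intro t
    have := ((harg t).sinh).const_mul (s / a)
    refine this.congr_deriv ?_
    simp only [hY]
    field_simp
  -- differences
  set F : ℝ → ℝ := fun t => y t - Y t with hF
  set G : ℝ → ℝ := fun t => z t - Z t with hG
  have hF0 : F 0 = 0 := by simp [hF, hY, ← hθy, hs]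
  have hG0 : G 0 = 0 := by simp [hG, hZ, ← hθz, hs]
  have hFd : ∀ t, HasDerivAt F (a ^ 2 * G t) t := by
    intro t
    have := (hy t).sub (hYd t)
    refine this.congr_deriv ?_
    simp [hG]; ring
  have hGd : ∀ t, HasDerivAt G (F t) t := by
    intro t
    exact (hz t).sub (hZd t)
  have hP : ∀ t, F t + a * G t = 0 := by
    apply ode_zero a
    · intro t
      have := (hFd t).add ((hGd t).const_mul a)
      refine this.congr_deriv ?_
      ring
    · simp [hF0, hG0]
  have hQ : ∀ t, F t - a * G t = 0 := by
    apply ode_zero (-a)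
    · intro t
      have := (hFd t).sub ((hGd t).const_mul a)
      refine this.congr_deriv ?_
      ring
    · simp [hF0, hG0]
  have hFz : ∀ t, F t = 0 := by
    intro t
    have := hP t; have := hQ t; linarith
  have hGz : ∀ t, G t = 0 := by
    intro t
    have h1 := hP t; have h2 := hQ t
    have : 2 * (a * G t) = 0 := by linarith
    have := mul_eq_zero.mp (by linarith : a * G t = 0)
    rcases this with h | h
    · exact absurd h ha'
    · exact h
  intro t _
  have hyt : y t = Y t := by have := hFz t; simp [hF] at this; linarith
  have hzt : z t = Z t := by have := hGz t; simp [hG] at this; linarith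
  refine ⟨hyt, hzt, ?_⟩
  rw [hyt, hzt]
  have h2 : θ₀ + 2 * a * t = 2 * (θ₀ / 2 + a * t) := by ring
  rw [h2, Real.sinh_two_mul, hY, hZ]
  simp only
  rw [← hsc]
  field_simp
end

section
/- Let λ ∈ (0,1], z₀ > 0 and let z, α, β : ℝ → ℝ be differentiable nonnegative functions with β(0) > 0, α(0) ≥ β(0)/λ, satisfying for all t ≥ 0: α'(t) = λ·z(t)/(1 + exp(z(t)(α(t)+β(t)))) + (1−λ)·z(t)/(1 + exp(z(t)α(t))), β'(t) = λ·z(t)/(1 + exp(z(t)(α(t)+β(t)))), and z(t) > 0. Then for all t ≥ 0, α(t) ≥ β(t)/λ. -/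
/-- Gradient starvation dynamics: the frequent-feature coefficient `α` dominates the
rare-feature coefficient `β` rescaled by the frequency `λ` at all times. -/
theorem stmt_9 (lam : ℝ) (hlam : lam ∈ Set.Ioc (0:ℝ) 1)
    (z α β : ℝ → ℝ) (hz0 : 0 < z 0)
    (hαd : Differentiable ℝ α) (hβd : Differentiable ℝ β) (hzd : Differentiable ℝ z)
    (hαnn : ∀ t ≥ (0:ℝ), 0 ≤ α t) (hβnn : ∀ t ≥ (0:ℝ), 0 ≤ β t)
    (hβ0 : 0 < β 0) (hαβ0 : α 0 ≥ β 0 / lam)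
    (hα : ∀ t ≥ (0:ℝ), HasDerivAt α
      (lam * z t / (1 + Real.exp (z t * (α t + β t)))
        + (1 - lam) * z t / (1 + Real.exp (z t * α t))) t)
    (hβ : ∀ t ≥ (0:ℝ), HasDerivAt β
      (lam * z t / (1 + Real.exp (z t * (α t + β t)))) t)
    (hzpos : ∀ t ≥ (0:ℝ), 0 < z t) :
    ∀ t ≥ (0:ℝ), α t ≥ β t / lam := by
  obtain ⟨hlam0, hlam1⟩ := hlam
  set f : ℝ → ℝ := fun t => lam * α t - β t with hf
  have hfd : Differentiable ℝ f := ((hαd.const_mul lam).sub hβd)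
  have hmono : MonotoneOn f (Set.Ici (0:ℝ)) := by
    apply monotoneOn_of_deriv_nonneg (convex_Ici 0) hfd.continuous.continuousOn
      hfd.differentiableOn
    intro t ht
    rw [interior_Ici] at ht
    have ht0 : (0:ℝ) ≤ t := le_of_lt ht
    have hfD : HasDerivAt f
        (lam * (lam * z t / (1 + Real.exp (z t * (α t + β t)))
          + (1 - lam) * z t / (1 + Real.exp (z t * α t)))
        - lam * z t / (1 + Real.exp (z t * (α t + β t)))) t :=
      ((hα t ht0).const_mul lam).sub (hβ t ht0)
    rw [hfD.deriv]
    have hzp := hzpos t ht0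
    have he1 : (0:ℝ) < 1 + Real.exp (z t * (α t + β t)) := by positivity
    have he2 : (0:ℝ) < 1 + Real.exp (z t * α t) := by positivity
    have hle : Real.exp (z t * α t) ≤ Real.exp (z t * (α t + β t)) := by
      apply Real.exp_le_exp.mpr
      nlinarith [hβnn t ht0]
    have hX : lam * z t / (1 + Real.exp (z t * (α t + β t)))
        ≤ lam * z t / (1 + Real.exp (z t * α t)) := by
      apply div_le_div_of_nonneg_left (by positivity) he2 (by linarith)
    set X1 := lam * z t / (1 + Real.exp (z t * (α t + β t)))
    set X2 := lam * z t / (1 + Real.exp (z t * α t))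
    have hX2 : (1 - lam) * z t / (1 + Real.exp (z t * α t)) = (1 - lam) * (z t / (1 + Real.exp (z t * α t))) := by ring
    have hX2' : X2 = lam * (z t / (1 + Real.exp (z t * α t))) := by
      simp [X2, mul_div_assoc]
    have hq : (0:ℝ) ≤ z t / (1 + Real.exp (z t * α t)) := by positivity
    rw [hX2]
    nlinarith [hX, hq]
  intro t ht
  have h0 : (0:ℝ) ≤ f t := by
    have := hmono (Set.self_mem_Ici) (Set.mem_Ici.mpr ht) ht
    have hf0 : 0 ≤ f 0 := by
      have : β 0 / lam * lam ≤ α 0 * lam := by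
        exact mul_le_mul_of_nonneg_right hαβ0 hlam0.le
      rw [div_mul_cancel₀ _ (ne_of_gt hlam0)] at this
      simp only [hf]
      linarith
    linarith
  rw [ge_iff_le, div_le_iff₀ hlam0]
  simp only [hf] at h0
  linarith
end

section
/- Under the gradient starvation dynamics (α'(t) = λ·z/(1+exp(z(α+β))) + (1−λ)·z/(1+exp(zα)), β'(t) = λ·z/(1+exp(z(α+β))), z(t) > 0, α(0) ≥ β(0)/λ > 0), let δ ∈ (0, 1/2) and suppose t* > 0 satisfies z(t*)·α(t*) = log((1−δ)/δ). Then the sigmoid of z(t*)·β(t*) satisfies 1/(1 + exp(−z(t*)β(t*))) ≤ 1/(1 + exp(−λ·log((1−δ)/δ))). -/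
/-- Gradient starvation theorem: when training stops at confidence `1 − δ` on the
frequent feature, the confidence on the rare feature is bounded by
`σ(λ·log((1−δ)/δ))`. -/
theorem stmt_10 (lam : ℝ) (hlam : lam ∈ Set.Ioc (0:ℝ) 1)
    (z α β : ℝ → ℝ)
    (hα : ∀ t ≥ (0:ℝ), HasDerivAt α
      (lam * z t / (1 + Real.exp (z t * (α t + β t)))
        + (1 - lam) * z t / (1 + Real.exp (z t * α t))) t)
    (hβ : ∀ t ≥ (0:ℝ), HasDerivAt β
      (lam * z t / (1 + Real.exp (z t * (α t + β t)))) t)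
    (hzpos : ∀ t ≥ (0:ℝ), 0 < z t)
    (hβ0 : 0 < β 0 / lam) (hαβ0 : α 0 ≥ β 0 / lam)
    (δ : ℝ) (hδ : δ ∈ Set.Ioo (0:ℝ) (1/2))
    (tstar : ℝ) (htpos : 0 < tstar)
    (hstop : z tstar * α tstar = Real.log ((1 - δ) / δ)) :
    1 / (1 + Real.exp (-(z tstar * β tstar)))
      ≤ 1 / (1 + Real.exp (-(lam * Real.log ((1 - δ) / δ)))) := by
  obtain ⟨hlam0, hlam1⟩ := hlam
  have hβ0' : 0 < β 0 := by
    have := mul_pos hβ0 hlam0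
    rwa [div_mul_cancel₀ _ (ne_of_gt hlam0)] at this
  -- β is monotone on [0, tstar]
  have hβmono : MonotoneOn β (Set.Icc 0 tstar) := by
    apply monotoneOn_of_deriv_nonneg (convex_Icc 0 tstar)
    · intro t ht
      exact ((hβ t ht.1).continuousAt).continuousWithinAt
    · intro t ht
      rw [interior_Icc] at ht
      exact ((hβ t ht.1.le).differentiableAt).differentiableWithinAt
    · intro t ht
      rw [interior_Icc] at ht
      rw [(hβ t ht.1.le).deriv]
      have hz := hzpos t ht.1.le
      have hd : 0 < 1 + Real.exp (z t * (α t + β t)) := by positivity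
      positivity
  have hβpos : ∀ t ∈ Set.Icc (0:ℝ) tstar, 0 ≤ β t := by
    intro t ht
    have := hβmono (Set.left_mem_Icc.2 htpos.le) ht ht.1
    linarith
  -- g = λα − β is monotone on [0, tstar]
  have hgmono : MonotoneOn (fun t => lam * α t - β t) (Set.Icc 0 tstar) := by
    apply monotoneOn_of_deriv_nonneg (convex_Icc 0 tstar)
    · intro t ht
      exact (((hα t ht.1).const_mul lam).sub (hβ t ht.1)).continuousAt.continuousWithinAt
    · intro t ht
      rw [interior_Icc] at ht
      exact (((hα t ht.1.le).const_mul lam).sub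
        (hβ t ht.1.le)).differentiableAt.differentiableWithinAt
    · intro t ht
      rw [interior_Icc] at ht
      rw [(((hα t ht.1.le).const_mul lam).fun_sub (hβ t ht.1.le)).deriv]
      have hz := hzpos t ht.1.le
      have hβt : 0 ≤ β t := hβpos t ⟨ht.1.le, ht.2.le⟩
      have hle : Real.exp (z t * α t) ≤ Real.exp (z t * (α t + β t)) := by
        apply Real.exp_le_exp.2
        nlinarith
      have hd2 : (0:ℝ) < 1 + Real.exp (z t * α t) := by positivity
      have hd1 : (0:ℝ) < 1 + Real.exp (z t * (α t + β t)) := by positivity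
      have hdd : 1 + Real.exp (z t * α t) ≤ 1 + Real.exp (z t * (α t + β t)) := by linarith
      have hinv : 1 / (1 + Real.exp (z t * (α t + β t))) ≤ 1 / (1 + Real.exp (z t * α t)) :=
        one_div_le_one_div_of_le hd2 hdd
      set a := 1 / (1 + Real.exp (z t * (α t + β t))) with ha
      set b := 1 / (1 + Real.exp (z t * α t)) with hb
      have h1 : lam * z t / (1 + Real.exp (z t * (α t + β t))) = lam * z t * a := by
        rw [ha]; ring
      have h2 : (1 - lam) * z t / (1 + Real.exp (z t * α t)) = (1 - lam) * z t * b := by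
        rw [hb]; ring
      rw [h1, h2]
      nlinarith [mul_nonneg (mul_nonneg (mul_nonneg hlam0.le (sub_nonneg.2 hlam1))
        hz.le) (sub_nonneg.2 hinv)]
  -- conclude β(t*) ≤ λ α(t*)
  have hg0 : 0 ≤ lam * α 0 - β 0 := by
    have : lam * (β 0 / lam) ≤ lam * α 0 := by
      exact mul_le_mul_of_nonneg_left hαβ0 hlam0.le
    rw [mul_div_cancel₀ _ (ne_of_gt hlam0)] at this
    linarith
  have hgt : 0 ≤ lam * α tstar - β tstar := by
    have := hgmono (Set.left_mem_Icc.2 htpos.le) (Set.right_mem_Icc.2 htpos.le) htpos.le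
    simpa using le_trans hg0 this
  have hz := hzpos tstar htpos.le
  have hkey : z tstar * β tstar ≤ lam * Real.log ((1 - δ) / δ) := by
    rw [← hstop]
    nlinarith
  have hexp : Real.exp (-(lam * Real.log ((1 - δ) / δ))) ≤
      Real.exp (-(z tstar * β tstar)) := Real.exp_le_exp.2 (neg_le_neg hkey)
  have hdpos : (0:ℝ) < 1 + Real.exp (-(lam * Real.log ((1 - δ) / δ))) := by positivity
  exact one_div_le_one_div_of_le hdpos (by linarith)
end

section
/- Let a > 0 and u₀ > 0. The function t ↦ (1/(2a))·(log(u/u₀) + Ei(u) − Ei(u₀)), as a function of u on [u₀, ∞), is a strictly increasing bijection from [u₀, ∞) to [0, ∞), where Ei is the exponential integral. Its inverse u(t) solves u'(t) = 2a·u(t)/(1 + exp(u(t))) with u(0) = u₀. -/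
/-- The exponential integral `Ei(x)` for `x > 0` (principal value), via the
standard identity `Ei(x) = γ + log x + ∫₀ˣ (e^t − 1)/t dt`. -/
noncomputable def expInt (x : ℝ) : ℝ :=
  Real.eulerMascheroniConstant + Real.log x + ∫ t in (0:ℝ)..x, (Real.exp t - 1) / t

namespace Stmt15Aux

open Real Set MeasureTheory intervalIntegral Filter

lemma uIcc_subset_Ioi {x y : ℝ} (hx : 0 < x) (hy : 0 < y) : Set.uIcc x y ⊆ Ioi 0 := by
  intro t ht
  exact lt_of_lt_of_le (lt_min hx hy) ht.1

lemma cont_f : ContinuousOn (fun t : ℝ => (1 + Real.exp t) / t) (Ioi 0) :=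
  ContinuousOn.div (by fun_prop) continuousOn_id (fun t ht => ne_of_gt ht)

lemma intble_f {u₀ v : ℝ} (hu₀ : 0 < u₀) (hv : 0 < v) :
    IntervalIntegrable (fun t : ℝ => (1 + Real.exp t) / t) volume u₀ v :=
  (cont_f.mono (uIcc_subset_Ioi hu₀ hv)).intervalIntegrable

lemma intble_inv {u₀ v : ℝ} (hu₀ : 0 < u₀) (hv : 0 < v) :
    IntervalIntegrable (fun t : ℝ => 1 / t) volume u₀ v :=
  ((ContinuousOn.div continuousOn_const continuousOn_id fun t ht => ne_of_gt ht).mono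
    (uIcc_subset_Ioi hu₀ hv)).intervalIntegrable

lemma intble_g {u₀ v : ℝ} (hu₀ : 0 < u₀) (hv : 0 < v) :
    IntervalIntegrable (fun t : ℝ => (Real.exp t - 1) / t) volume u₀ v :=
  ((ContinuousOn.div (by fun_prop) continuousOn_id fun t ht => ne_of_gt ht).mono
    (uIcc_subset_Ioi hu₀ hv)).intervalIntegrable

lemma intble_g0 {v : ℝ} (hv : 0 ≤ v) :
    IntervalIntegrable (fun t : ℝ => (Real.exp t - 1) / t) volume 0 v := by
  rw [intervalIntegrable_iff, Set.uIoc_of_le hv]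
  apply Measure.integrableOn_of_bounded (M := Real.exp v) measure_Ioc_lt_top.ne
  · exact ((Real.continuous_exp.sub continuous_const).measurable.div
      measurable_id).aestronglyMeasurable
  · rw [ae_restrict_iff' measurableSet_Ioc]
    apply ae_of_all
    intro x hx
    have hx0 : 0 < x := hx.1
    have hxe : Real.exp x ≤ Real.exp v := Real.exp_le_exp.2 hx.2
    have h1 : (1 - x) * Real.exp x ≤ 1 := by
      have h2 : -x + 1 ≤ Real.exp (-x) := Real.add_one_le_exp (-x)
      rw [Real.exp_neg] at h2
      have h3 := mul_le_mul_of_nonneg_right h2 (Real.exp_pos x).le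
      rw [inv_mul_cancel₀ (Real.exp_pos x).ne'] at h3
      linarith
    have hnum0 : 0 ≤ Real.exp x - 1 := by nlinarith [Real.add_one_le_exp x]
    rw [Real.norm_eq_abs, abs_of_nonneg (div_nonneg hnum0 hx0.le), div_le_iff₀ hx0]
    nlinarith

/-- `G u₀ v = ∫_{u₀}^v (1+e^t)/t dt`. -/
noncomputable def G (u₀ : ℝ) (v : ℝ) : ℝ := ∫ t in u₀..v, (1 + Real.exp t) / t

lemma G_deriv {u₀ : ℝ} (hu₀ : 0 < u₀) {v : ℝ} (hv : 0 < v) :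
    HasDerivAt (G u₀) ((1 + Real.exp v) / v) v :=
  intervalIntegral.integral_hasDerivAt_right (intble_f hu₀ hv)
    (ContinuousOn.stronglyMeasurableAtFilter isOpen_Ioi cont_f v hv)
    (cont_f.continuousAt (Ioi_mem_nhds hv))

lemma G_eq {u₀ : ℝ} (hu₀ : 0 < u₀) {v : ℝ} (hv : 0 < v) :
    Real.log (v / u₀) + expInt v - expInt u₀ = G u₀ v := by
  have hzero : (0:ℝ) ∉ Set.uIcc u₀ v := fun h =>
    lt_irrefl (0:ℝ) (uIcc_subset_Ioi hu₀ hv h)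
  have h1 : (∫ t in (0:ℝ)..v, (Real.exp t - 1) / t)
      - ∫ t in (0:ℝ)..u₀, (Real.exp t - 1) / t
      = ∫ t in u₀..v, (Real.exp t - 1) / t :=
    intervalIntegral.integral_interval_sub_left (intble_g0 hv.le) (intble_g0 hu₀.le)
  have h2 : G u₀ v = ∫ t in u₀..v, (2 * (1 / t) + (Real.exp t - 1) / t) := by
    apply intervalIntegral.integral_congr
    intro t ht
    have ht0 : (0:ℝ) < t := uIcc_subset_Ioi hu₀ hv ht
    field_simp
    ring
  have h3 : (∫ t in u₀..v, (2 * (1 / t) + (Real.exp t - 1) / t))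
      = 2 * Real.log (v / u₀) + ∫ t in u₀..v, (Real.exp t - 1) / t := by
    rw [intervalIntegral.integral_add ((intble_inv hu₀ hv).const_mul 2) (intble_g hu₀ hv),
      intervalIntegral.integral_const_mul, integral_one_div hzero]
  rw [expInt, expInt, h2, h3, ← h1, Real.log_div hv.ne' hu₀.ne']
  ring

lemma G_ge {u₀ : ℝ} (hu₀ : 0 < u₀) {v : ℝ} (hv : u₀ ≤ v) :
    Real.log (v / u₀) ≤ G u₀ v := by
  have hv0 : 0 < v := lt_of_lt_of_le hu₀ hv
  have hzero : (0:ℝ) ∉ Set.uIcc u₀ v := fun h =>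
    lt_irrefl (0:ℝ) (uIcc_subset_Ioi hu₀ hv0 h)
  rw [← integral_one_div hzero]
  apply intervalIntegral.integral_mono_on hv (intble_inv hu₀ hv0) (intble_f hu₀ hv0)
  intro x hx
  have hx0 : 0 < x := lt_of_lt_of_le hu₀ hx.1
  gcongr
  linarith [Real.exp_pos x]

lemma G_le {u₀ : ℝ} (hu₀ : 0 < u₀) {v : ℝ} (hv0 : 0 < v) (hv : v ≤ u₀) :
    G u₀ v ≤ Real.log (v / u₀) := by
  have hzero : (0:ℝ) ∉ Set.uIcc v u₀ := fun h =>
    lt_irrefl (0:ℝ) (uIcc_subset_Ioi hv0 hu₀ h)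
  have hmono : (∫ t in v..u₀, (1:ℝ) / t) ≤ ∫ t in v..u₀, (1 + Real.exp t) / t := by
    apply intervalIntegral.integral_mono_on hv (intble_inv hv0 hu₀) (intble_f hv0 hu₀)
    intro x hx
    have hx0 : 0 < x := lt_of_lt_of_le hv0 hx.1
    have : (1:ℝ) ≤ 1 + Real.exp x := by linarith [Real.exp_pos x]
    gcongr
  have hsym : G u₀ v = -∫ t in v..u₀, (1 + Real.exp t) / t :=
    intervalIntegral.integral_symm v u₀
  have hlog : (∫ t in v..u₀, (1:ℝ) / t) = Real.log (u₀ / v) := integral_one_div hzero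
  have hlv : Real.log (v / u₀) = - Real.log (u₀ / v) := by
    rw [← Real.log_inv, inv_div]
  rw [hsym, hlv]
  rw [hlog] at hmono
  linarith

end Stmt15Aux

/-- Closed-form solution of the cross-entropy learning dynamics in the degenerate
case: `u ↦ (1/(2a))(log(u/u₀) + Ei(u) − Ei(u₀))` is a strictly increasing bijection
from `[u₀, ∞)` to `[0, ∞)`, and its inverse solves the logit ODE. -/
theorem stmt_15 (a : ℝ) (ha : 0 < a) (u₀ : ℝ) (hu₀ : 0 < u₀) :
    StrictMonoOn (fun u => 1 / (2 * a) * (Real.log (u / u₀) + expInt u - expInt u₀))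
        (Set.Ici u₀) ∧
      Set.BijOn (fun u => 1 / (2 * a) * (Real.log (u / u₀) + expInt u - expInt u₀))
        (Set.Ici u₀) (Set.Ici 0) ∧
      ∃ u : ℝ → ℝ, u 0 = u₀ ∧
        (∀ t ≥ (0:ℝ), HasDerivAt u (2 * a * u t / (1 + Real.exp (u t))) t) ∧
        ∀ v ∈ Set.Ici u₀,
          u (1 / (2 * a) * (Real.log (v / u₀) + expInt v - expInt u₀)) = v := by
  open Real Set MeasureTheory Filter Stmt15Aux in
  set f : ℝ → ℝ := fun u => 1 / (2 * a) * (Real.log (u / u₀) + expInt u - expInt u₀) with hf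
  set Gs : ℝ → ℝ := fun v => 1 / (2 * a) * Stmt15Aux.G u₀ v with hGs
  have hEq : ∀ v : ℝ, 0 < v → f v = Gs v := by
    intro v hv
    simp only [hf, hGs, G_eq hu₀ hv]
  have hGs_deriv : ∀ v ∈ Ioi (0:ℝ), HasDerivAt Gs (1 / (2 * a) * ((1 + Real.exp v) / v)) v := by
    intro v hv
    exact (G_deriv hu₀ hv).const_mul _
  have hGsmono : StrictMonoOn Gs (Ioi 0) := by
    apply strictMonoOn_of_deriv_pos (convex_Ioi 0)
      (fun x hx => (hGs_deriv x hx).continuousAt.continuousWithinAt)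
    intro x hx
    rw [interior_Ioi] at hx
    rw [(hGs_deriv x hx).deriv]
    have hx0 : (0:ℝ) < x := hx
    positivity
  have hGsu₀ : Gs u₀ = 0 := by
    simp [hGs, Stmt15Aux.G, intervalIntegral.integral_same]
  have hGscont : ContinuousOn Gs (Ioi 0) :=
    fun x hx => (hGs_deriv x hx).continuousAt.continuousWithinAt
  have ha2 : (0:ℝ) < 2 * a := by linarith
  -- surjectivity of Gs : (0, ∞) → ℝ
  have hsurj : ∀ y : ℝ, ∃ v ∈ Ioi (0:ℝ), Gs v = y := by
    intro y
    set w := u₀ * Real.exp (2 * a * y) with hw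
    have hw0 : 0 < w := by positivity
    have hlogw : Real.log (w / u₀) = 2 * a * y := by
      rw [hw, mul_comm u₀ _, mul_div_assoc, div_self hu₀.ne', mul_one, Real.log_exp]
    rcases le_total w u₀ with h | h
    · have hyle : y ≤ 0 := by
        have h1 : Real.exp (2 * a * y) ≤ 1 := by
          by_contra hc
          push_neg at hc
          nlinarith
        rw [show (1:ℝ) = Real.exp 0 from (Real.exp_zero).symm] at h1
        have := Real.exp_le_exp.1 h1
        nlinarith
      have hGw : Gs w ≤ y := by
        have h1 := G_le hu₀ hw0 h
        rw [hlogw] at h1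
        have h2 : Gs w ≤ 1 / (2 * a) * (2 * a * y) :=
          mul_le_mul_of_nonneg_left h1 (by positivity)
        have h3 : 1 / (2 * a) * (2 * a * y) = y := by field_simp
        linarith
      obtain ⟨v, hvmem, hveq⟩ := intermediate_value_Icc h
        (hGscont.mono (fun x hx => lt_of_lt_of_le hw0 hx.1))
        ⟨hGw, by rw [hGsu₀]; exact hyle⟩
      exact ⟨v, lt_of_lt_of_le hw0 hvmem.1, hveq⟩
    · have hyge : 0 ≤ y := by
        have h1 : (1:ℝ) ≤ Real.exp (2 * a * y) := by
          by_contra hc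
          push_neg at hc
          nlinarith
        rw [show (1:ℝ) = Real.exp 0 from (Real.exp_zero).symm] at h1
        have := Real.exp_le_exp.1 h1
        nlinarith
      have hGw : y ≤ Gs w := by
        have h1 := G_ge hu₀ h
        rw [hlogw] at h1
        have h2 : 1 / (2 * a) * (2 * a * y) ≤ Gs w :=
          mul_le_mul_of_nonneg_left h1 (by positivity)
        have h3 : 1 / (2 * a) * (2 * a * y) = y := by field_simp
        linarith
      obtain ⟨v, hvmem, hveq⟩ := intermediate_value_Icc h
        (hGscont.mono (fun x hx => lt_of_lt_of_le hu₀ hx.1))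
        ⟨by rw [hGsu₀]; exact hyge, hGw⟩
      exact ⟨v, lt_of_lt_of_le hu₀ hvmem.1, hveq⟩
  have hGsinj : Set.InjOn Gs (Ioi 0) := hGsmono.injOn
  set u : ℝ → ℝ := Function.invFunOn Gs (Ioi 0) with hu
  have hleftinv : ∀ v ∈ Ioi (0:ℝ), u (Gs v) = v := fun v hv =>
    hGsinj.leftInvOn_invFunOn hv
  have hrightinv : ∀ y : ℝ, Gs (u y) = y := fun y =>
    Function.invFunOn_eq (hsurj y)
  have humem : ∀ y : ℝ, u y ∈ Ioi (0:ℝ) := fun y =>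
    Function.invFunOn_mem (hsurj y)
  have humono : Monotone u := by
    intro y1 y2 h12
    by_contra hc
    push_neg at hc
    have := hGsmono (humem y2) (humem y1) hc
    rw [hrightinv, hrightinv] at this
    exact absurd h12 (not_le.2 this)
  have hurange : Set.range u = Ioi (0:ℝ) := by
    apply Set.Subset.antisymm
    · rintro x ⟨y, rfl⟩
      exact humem y
    · intro v hv
      exact ⟨Gs v, hleftinv v hv⟩
  have hucont : ∀ t : ℝ, ContinuousAt u t := by
    intro t
    apply continuousAt_of_monotoneOn_of_image_mem_nhds
      (fun x _ y _ hxy => humono hxy) univ_mem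
    rw [Set.image_univ, hurange]
    exact isOpen_Ioi.mem_nhds (humem t)
  have huderiv : ∀ t : ℝ, HasDerivAt u (2 * a * u t / (1 + Real.exp (u t))) t := by
    intro t
    have hut : (0:ℝ) < u t := humem t
    have hd : HasDerivAt u (1 / (2 * a) * ((1 + Real.exp (u t)) / u t))⁻¹ t :=
      HasDerivAt.of_local_left_inverse (hucont t) (hGs_deriv _ (humem t))
        (by positivity) (Filter.Eventually.of_forall hrightinv)
    convert hd using 1
    have h1e : (0:ℝ) < 1 + Real.exp (u t) := by positivity
    field_simp
  have hmonoIci : StrictMonoOn f (Set.Ici u₀) := by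
    intro x hx y hy hxy
    have hx0 : (0:ℝ) < x := lt_of_lt_of_le hu₀ hx
    have hy0 : (0:ℝ) < y := lt_of_lt_of_le hu₀ hy
    rw [hEq x hx0, hEq y hy0]
    exact hGsmono hx0 hy0 hxy
  refine ⟨hmonoIci, ⟨?_, hmonoIci.injOn, ?_⟩, u, ?_, fun t _ => huderiv t, ?_⟩
  · -- MapsTo
    intro x hx
    have hx0 : (0:ℝ) < x := lt_of_lt_of_le hu₀ hx
    rw [Set.mem_Ici, hEq x hx0, ← hGsu₀]
    exact hGsmono.monotoneOn hu₀ hx0 hx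
  · -- SurjOn
    intro y hy
    have huy : u y ∈ Set.Ici u₀ := by
      by_contra hc
      rw [Set.mem_Ici, not_le] at hc
      have := hGsmono (humem y) hu₀ hc
      rw [hrightinv, hGsu₀] at this
      exact absurd hy (not_le.2 this)
    refine ⟨u y, huy, ?_⟩
    rw [hEq (u y) (humem y)]
    exact hrightinv y
  · -- u 0 = u₀
    rw [← hGsu₀]
    exact hleftinv u₀ hu₀
  · -- inverse property
    intro v hv
    have hv0 : (0:ℝ) < v := lt_of_lt_of_le hu₀ hv
    have : (1 / (2 * a) * (Real.log (v / u₀) + expInt v - expInt u₀)) = Gs v := hEq v hv0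
    rw [this]
    exact hleftinv v hv0
end

section
/- Let a > 0, u₀ > 0, and let u solve u'(t) = 2a·u(t)/(1 + exp(u(t))), u(0) = u₀. Then for any u_f ≥ u₀, the time t with u(t) = u_f satisfies t ≥ (1/a)·(exp(u_f/2) − exp(u₀/2)), hence the time to reach confidence σ(u_f) = 1 − δ grows at least like (1/a)·√((1−δ)/δ) as δ → 0. -/
lemma aux_ineq (y : ℝ) : y * Real.exp (y / 2) ≤ 1 + Real.exp y := by
  have hp := Real.exp_pos (y / 4)
  have h1 : Real.exp (y / 2) = Real.exp (y / 4) * Real.exp (y / 4) := by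
    rw [← Real.exp_add]; ring_nf
  have h2 : Real.exp y = Real.exp (y / 2) * Real.exp (y / 2) := by
    rw [← Real.exp_add]; ring_nf
  have h3 := Real.add_one_le_exp (y / 4)
  nlinarith [sq_nonneg (Real.exp (y / 4) * (Real.exp (y / 4) - 2)),
    sq_nonneg (Real.exp (y / 4) - 1), Real.exp_pos (y / 2)]

/-- Lower bound on the training time under cross-entropy: reaching logit `u_f`
takes at least `(1/a)(e^{u_f/2} − e^{u₀/2})`, hence reaching confidence `1 − δ`
takes at least `(1/a)(√((1−δ)/δ) − e^{u₀/2})`. -/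
theorem stmt_16 (a : ℝ) (ha : 0 < a) (u : ℝ → ℝ) (u₀ : ℝ) (hu0 : u 0 = u₀) (hpos : 0 < u₀)
    (hode : ∀ t ≥ (0:ℝ), HasDerivAt u (2 * a * u t / (1 + Real.exp (u t))) t) :
    (∀ uf ≥ u₀, ∀ t ≥ (0:ℝ), u t = uf →
        t ≥ 1 / a * (Real.exp (uf / 2) - Real.exp (u₀ / 2))) ∧
      ∀ δ ∈ Set.Ioo (0:ℝ) 1, Real.log ((1 - δ) / δ) ≥ u₀ →
        ∀ t ≥ (0:ℝ), u t = Real.log ((1 - δ) / δ) →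
          t ≥ 1 / a * (Real.sqrt ((1 - δ) / δ) - Real.exp (u₀ / 2)) := by
  have hderiv : ∀ x ∈ Set.Ici (0:ℝ), HasDerivAt (fun s => a * s - Real.exp (u s / 2))
      (a - Real.exp (u x / 2) * (2 * a * u x / (1 + Real.exp (u x)) / 2)) x := by
    intro x hx
    exact (((hasDerivAt_id' x).const_mul a).sub (((hode x hx).div_const 2).exp)).congr_deriv (by ring)
  have hd_nonneg : ∀ x, 0 ≤ a - Real.exp (u x / 2) * (2 * a * u x / (1 + Real.exp (u x)) / 2) := by
    intro x
    have he := Real.exp_pos (u x)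
    have hden : (0:ℝ) < 1 + Real.exp (u x) := by linarith
    have key := aux_ineq (u x)
    rw [sub_nonneg]
    have : Real.exp (u x / 2) * (2 * a * u x / (1 + Real.exp (u x)) / 2)
        = a * (u x * Real.exp (u x / 2)) / (1 + Real.exp (u x)) := by ring
    rw [this, div_le_iff₀ hden]
    nlinarith [Real.exp_pos (u x / 2)]
  have hmono : MonotoneOn (fun s => a * s - Real.exp (u s / 2)) (Set.Ici 0) := by
    apply monotoneOn_of_deriv_nonneg (convex_Ici 0)
    · exact fun x hx => ((hderiv x hx).continuousAt).continuousWithinAt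
    · intro x hx
      rw [interior_Ici] at hx
      exact ((hderiv x (Set.mem_Ici.mpr (le_of_lt hx))).differentiableAt).differentiableWithinAt
    · intro x hx
      rw [interior_Ici] at hx
      rw [(hderiv x (Set.mem_Ici.mpr (le_of_lt hx))).deriv]
      exact hd_nonneg x
  have key : ∀ uf ≥ u₀, ∀ t ≥ (0:ℝ), u t = uf →
      t ≥ 1 / a * (Real.exp (uf / 2) - Real.exp (u₀ / 2)) := by
    intro uf hf t ht hut
    have h0 : (fun s => a * s - Real.exp (u s / 2)) 0 ≤
        (fun s => a * s - Real.exp (u s / 2)) t :=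
      hmono (Set.mem_Ici.mpr (le_refl 0)) ht ht
    simp only [hu0, hut, mul_zero, zero_sub] at h0
    rw [ge_iff_le, one_div, inv_mul_eq_div, div_le_iff₀ ha]
    linarith
  refine ⟨key, ?_⟩
  intro δ hδ hlog t ht hut
  have hx : (0:ℝ) < (1 - δ) / δ := div_pos (by linarith [hδ.2]) hδ.1
  have hs : Real.exp (Real.log ((1 - δ) / δ) / 2) = Real.sqrt ((1 - δ) / δ) := by
    rw [← Real.log_sqrt hx.le, Real.exp_log (Real.sqrt_pos.mpr hx)]
  have := key (Real.log ((1 - δ) / δ)) hlog t ht hut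
  rwa [hs] at this
end

section
/- Consider m mutually orthogonal vectors x₁, …, x_m ∈ ℝ^d all of the same norm a > 0, and gradient-flow dynamics (y^i)'(t) = a²·z(t)/(1 + exp(z(t) y^i(t))), z'(t) = Σ_{i=1}^m y^i(t)/(1 + exp(z(t) y^i(t))). If y^1(0) = … = y^m(0) = y₀ > 0, then y^1(t) = … = y^m(t) for all t ≥ 0, and if additionally m·y₀² = a²·z(0)² with z(0) > 0, then u(t) := z(t)·y^1(t) satisfies u'(t) = 2√m·a·u(t)/(1 + exp(u(t))). -/
open Set Real

/-- Grönwall: a function vanishing at 0 with |f'| ≤ K|f| on [0,T] vanishes at T. -/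
lemma eqzero_of_deriv_bound {f f' : ℝ → ℝ} {K T : ℝ} (hT : 0 ≤ T)
    (hc : ContinuousOn f (Icc 0 T))
    (hd : ∀ t ∈ Ico 0 T, HasDerivWithinAt f (f' t) (Ici t) t)
    (h0 : f 0 = 0)
    (hb : ∀ t ∈ Ico 0 T, |f' t| ≤ K * |f t|) : f T = 0 := by
  have h := norm_le_gronwallBound_of_norm_deriv_right_le (δ := 0) (K := K) (ε := 0)
    hc hd (by simp [h0]) (fun t ht => by simpa [Real.norm_eq_abs] using hb t ht)
    T (right_mem_Icc.2 hT)
  rw [gronwallBound_ε0_δ0] at h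
  simpa [Real.norm_eq_abs, abs_nonpos_iff] using h

/-- The logistic-type map `v ↦ (1+e^v)⁻¹` is 1/4-Lipschitz. -/
lemma sigma_lip (p q : ℝ) :
    |(1 + Real.exp p)⁻¹ - (1 + Real.exp q)⁻¹| ≤ |p - q| / 4 := by
  have hderiv : ∀ v : ℝ, HasDerivAt (fun v => (1 + Real.exp v)⁻¹)
      (-(Real.exp v) / (1 + Real.exp v) ^ 2) v := by
    intro v
    have h1 : HasDerivAt (fun v => 1 + Real.exp v) (Real.exp v) v :=
      (Real.hasDerivAt_exp v).const_add 1
    exact h1.inv (by positivity)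
  have hlip : LipschitzWith (1/4 : NNReal) (fun v => (1 + Real.exp v)⁻¹) := by
    apply lipschitzWith_of_nnnorm_deriv_le (fun v => (hderiv v).differentiableAt)
    intro v
    rw [(hderiv v).deriv]
    rw [← NNReal.coe_le_coe]
    push_cast
    rw [Real.norm_eq_abs]
    have he := Real.exp_pos v
    rw [abs_div, abs_neg, abs_of_pos he, abs_of_pos (by positivity : (0:ℝ) < (1 + Real.exp v)^2)]
    rw [div_le_iff₀ (by positivity)]
    nlinarith [sq_nonneg (1 - Real.exp v)]
  have := hlip.dist_le_mul p q
  rw [Real.dist_eq, Real.dist_eq] at this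
  calc |(1 + Real.exp p)⁻¹ - (1 + Real.exp q)⁻¹| ≤ (1/4 : NNReal) * |p - q| := this
    _ = |p - q| / 4 := by push_cast; ring

/-- Relaxation to a class of `m` mutually orthogonal datapoints of equal norm `a`:
the projections stay equal, and under balanced initialization the logit satisfies
`u' = 2√m·a·u/(1 + e^u)`. -/
theorem stmt_17 (d m : ℕ) (hm : 0 < m) (a : ℝ) (ha : 0 < a)
    (x : Fin m → EuclideanSpace ℝ (Fin d))
    (horth : ∀ i j, i ≠ j → inner ℝ (x i) (x j) = (0:ℝ))
    (hnorm : ∀ i, ‖x i‖ = a)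
    (y : Fin m → ℝ → ℝ) (z : ℝ → ℝ)
    (hy : ∀ i, ∀ t ≥ (0:ℝ), HasDerivAt (y i)
      (a ^ 2 * z t / (1 + Real.exp (z t * y i t))) t)
    (hz : ∀ t ≥ (0:ℝ), HasDerivAt z
      (∑ i, y i t / (1 + Real.exp (z t * y i t))) t)
    (y₀ : ℝ) (hy₀pos : 0 < y₀) (hinit : ∀ i, y i 0 = y₀) :
    (∀ t ≥ (0:ℝ), ∀ i j, y i t = y j t) ∧
      ((m : ℝ) * y₀ ^ 2 = a ^ 2 * z 0 ^ 2 → 0 < z 0 →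
        ∀ t ≥ (0:ℝ), HasDerivAt (fun s => z s * y ⟨0, hm⟩ s)
          (2 * Real.sqrt m * a * (z t * y ⟨0, hm⟩ t)
            / (1 + Real.exp (z t * y ⟨0, hm⟩ t))) t) := by
  have hypos : ∀ p : ℝ, (0:ℝ) < 1 + Real.exp p := fun p => by positivity
  -- Part 1
  have heq : ∀ t ≥ (0:ℝ), ∀ i j, y i t = y j t := by
    intro T hT i j
    -- bound for z on [0, T]
    obtain ⟨C, hC⟩ : ∃ C, ∀ s ∈ Set.Icc (0:ℝ) T, ‖z s‖ ≤ C := by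
      apply (isCompact_Icc).exists_bound_of_continuousOn
      intro s hs
      exact ((hz s hs.1).continuousAt).continuousWithinAt
    have hsub : y i T - y j T = 0 := by
      apply eqzero_of_deriv_bound (K := a ^ 2 * C ^ 2 / 4) hT
      · intro s hs
        exact (((hy i s hs.1).continuousAt).sub ((hy j s hs.1).continuousAt)).continuousWithinAt
      · exact fun s hs => ((hy i s hs.1).sub (hy j s hs.1)).hasDerivWithinAt
      · rw [hinit i, hinit j, sub_self]
      · intro s hs
        have hzC : |z s| ≤ C := by
          simpa [Real.norm_eq_abs] using hC s ⟨hs.1, hs.2.le⟩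
        have hC0 : (0:ℝ) ≤ C := le_trans (abs_nonneg _) hzC
        have key : |a ^ 2 * z s / (1 + Real.exp (z s * y i s))
            - a ^ 2 * z s / (1 + Real.exp (z s * y j s))|
            = a ^ 2 * |z s| * |(1 + Real.exp (z s * y i s))⁻¹
              - (1 + Real.exp (z s * y j s))⁻¹| := by
          rw [div_eq_mul_inv, div_eq_mul_inv, ← mul_sub, abs_mul, abs_mul, abs_pow,
            abs_of_pos ha]
        rw [key]
        calc a ^ 2 * |z s| * |(1 + Real.exp (z s * y i s))⁻¹
              - (1 + Real.exp (z s * y j s))⁻¹|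
            ≤ a ^ 2 * |z s| * (|z s * y i s - z s * y j s| / 4) := by
              apply mul_le_mul_of_nonneg_left (sigma_lip _ _) (by positivity)
          _ = a ^ 2 * |z s| ^ 2 / 4 * |y i s - y j s| := by
              rw [← mul_sub, abs_mul]; ring
          _ ≤ a ^ 2 * C ^ 2 / 4 * |y i s - y j s| := by
              apply mul_le_mul_of_nonneg_right _ (abs_nonneg _)
              have : |z s| ^ 2 ≤ C ^ 2 := by
                apply pow_le_pow_left₀ (abs_nonneg _) hzC
              nlinarith [sq_nonneg a]
    linarith [hsub]
  refine ⟨heq, ?_⟩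
  intro hbal hz0 t ht
  set Y : ℝ → ℝ := y ⟨0, hm⟩ with hY
  -- rewritten derivative of z
  have hz' : ∀ s ≥ (0:ℝ), HasDerivAt z
      ((m : ℝ) * (Y s / (1 + Real.exp (z s * Y s)))) s := by
    intro s hs
    have hsum : (∑ i, y i s / (1 + Real.exp (z s * y i s)))
        = (m : ℝ) * (Y s / (1 + Real.exp (z s * Y s))) := by
      rw [Finset.sum_congr rfl (fun i _ => by rw [heq s hs i ⟨0, hm⟩])]
      simp [mul_comm, hY]
    rw [← hsum]
    exact hz s hs
  -- conserved quantity : √m · Y = a · z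
  have hw : ∀ s ≥ (0:ℝ), Real.sqrt m * Y s - a * z s = 0 := by
    intro T hT
    apply eqzero_of_deriv_bound (K := Real.sqrt m * a) hT
    · intro s hs
      exact (((continuous_const.continuousAt).mul
        ((hy ⟨0, hm⟩ s hs.1).continuousAt)).sub
        ((continuous_const.continuousAt).mul ((hz' s hs.1).continuousAt))).continuousWithinAt
    · intro s hs
      exact (((hy ⟨0, hm⟩ s hs.1).const_mul (Real.sqrt m)).sub
        ((hz' s hs.1).const_mul a)).hasDerivWithinAt
    · have h1 : Y 0 = y₀ := hinit _
      have h2 : Real.sqrt m * y₀ = a * z 0 := by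
        have : Real.sqrt ((m : ℝ) * y₀ ^ 2) = Real.sqrt (a ^ 2 * z 0 ^ 2) := by rw [hbal]
        rwa [Real.sqrt_mul (Nat.cast_nonneg m), Real.sqrt_sq hy₀pos.le,
          Real.sqrt_mul (sq_nonneg a), Real.sqrt_sq ha.le, Real.sqrt_sq hz0.le] at this
      rw [h1, h2, sub_self]
    · intro s hs
      have hE := hypos (z s * Y s)
      have hms : Real.sqrt m * Real.sqrt m = (m : ℝ) :=
        Real.mul_self_sqrt (Nat.cast_nonneg m)
      have hnum : Real.sqrt m * (a ^ 2 * z s) - a * ((m : ℝ) * Y s)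
          = -(Real.sqrt m * a) * (Real.sqrt m * Y s - a * z s) := by
        linear_combination (a * Y s) * hms
      have hval : Real.sqrt m * (a ^ 2 * z s / (1 + Real.exp (z s * Y s)))
          - a * ((m : ℝ) * (Y s / (1 + Real.exp (z s * Y s))))
          = -(Real.sqrt m * a / (1 + Real.exp (z s * Y s)))
            * (Real.sqrt m * Y s - a * z s) := by
        calc Real.sqrt m * (a ^ 2 * z s / (1 + Real.exp (z s * Y s)))
              - a * ((m : ℝ) * (Y s / (1 + Real.exp (z s * Y s))))
            = (Real.sqrt m * (a ^ 2 * z s) - a * ((m : ℝ) * Y s))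
              / (1 + Real.exp (z s * Y s)) := by ring
          _ = (-(Real.sqrt m * a) * (Real.sqrt m * Y s - a * z s))
              / (1 + Real.exp (z s * Y s)) := by rw [hnum]
          _ = -(Real.sqrt m * a / (1 + Real.exp (z s * Y s)))
              * (Real.sqrt m * Y s - a * z s) := by ring
      rw [hval, abs_mul, abs_neg]
      apply mul_le_mul_of_nonneg_right _ (abs_nonneg _)
      rw [abs_div, abs_of_pos hE, abs_of_nonneg (by positivity : (0:ℝ) ≤ Real.sqrt m * a)]
      rw [div_le_iff₀ hE]
      nlinarith [Real.exp_pos (z s * Y s),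
        mul_nonneg (Real.sqrt_nonneg (m:ℝ)) ha.le]
  -- final derivative computation
  have hder : HasDerivAt (fun s => z s * Y s)
      ((m : ℝ) * (Y t / (1 + Real.exp (z t * Y t))) * Y t
        + z t * (a ^ 2 * z t / (1 + Real.exp (z t * Y t)))) t :=
    (hz' t ht).mul (hy ⟨0, hm⟩ t ht)
  have hEt := hypos (z t * Y t)
  have hbalt : Real.sqrt m * Y t = a * z t := by
    have := hw t ht; linarith
  have hms : Real.sqrt m * Real.sqrt m = (m : ℝ) :=
    Real.mul_self_sqrt (Nat.cast_nonneg m)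
  have hvals : (m : ℝ) * (Y t / (1 + Real.exp (z t * Y t))) * Y t
        + z t * (a ^ 2 * z t / (1 + Real.exp (z t * Y t)))
      = 2 * Real.sqrt m * a * (z t * Y t) / (1 + Real.exp (z t * Y t)) := by
    have key : (m : ℝ) * Y t * Y t + z t * (a ^ 2 * z t)
        = 2 * Real.sqrt m * a * (z t * Y t) := by
      linear_combination (Real.sqrt m * Y t - a * z t) * hbalt - (Y t * Y t) * hms
    calc (m : ℝ) * (Y t / (1 + Real.exp (z t * Y t))) * Y t
          + z t * (a ^ 2 * z t / (1 + Real.exp (z t * Y t)))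
        = ((m : ℝ) * Y t * Y t + z t * (a ^ 2 * z t))
          / (1 + Real.exp (z t * Y t)) := by ring
      _ = 2 * Real.sqrt m * a * (z t * Y t) / (1 + Real.exp (z t * Y t)) := by rw [key]
  rw [hvals] at hder
  exact hder
end

section
/- Let a > 0 and suppose u₁, u₂ : ℝ → ℝ both satisfy u'(t) = 2a·u(t)/(1 + exp(u(t))) with 0 < u₁(0) ≤ u₂(0). Then u₁(t) ≤ u₂(t) for all t ≥ 0, and for any target value u_f ≥ u₂(0), the times t₁, t₂ at which u₁, u₂ reach u_f satisfy t₁ − t₂ = (1/(2a))·(log(u₂(0)/u₁(0)) + Ei(u₂(0)) − Ei(u₁(0))). -/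
open Set Filter MeasureTheory

private lemma integrand_intervalIntegrable {x : ℝ} (hx : 0 < x) :
    IntervalIntegrable (fun t => (Real.exp t - 1) / t) volume 0 x := by
  rw [intervalIntegrable_iff_integrableOn_Ioc_of_le hx.le]
  have hmeas : Measurable (fun t : ℝ => (Real.exp t - 1) / t) :=
    (Real.measurable_exp.sub measurable_const).div measurable_id
  apply Integrable.mono' (g := fun _ => Real.exp x)
  · exact integrableOn_const measure_Ioc_lt_top.ne
  · exact hmeas.aestronglyMeasurable
  · filter_upwards [ae_restrict_mem measurableSet_Ioc] with t ht
    have ht0 : 0 < t := ht.1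
    have h1 : 0 ≤ (Real.exp t - 1) / t := by
      apply div_nonneg _ ht0.le
      nlinarith [Real.add_one_le_exp t]
    have h2 : (Real.exp t - 1) / t ≤ Real.exp x := by
      rw [div_le_iff₀ ht0]
      have hte : Real.exp t ≤ Real.exp x := Real.exp_le_exp.2 ht.2
      have hk : Real.exp t * Real.exp (-t) = 1 := by
        rw [← Real.exp_add]; simp
      have h3 : Real.exp t * (-t + 1) ≤ Real.exp t * Real.exp (-t) :=
        mul_le_mul_of_nonneg_left (Real.add_one_le_exp (-t)) (Real.exp_pos t).le
      rw [hk] at h3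
      nlinarith
    rw [Real.norm_eq_abs, abs_of_nonneg h1]; exact h2

/-- `G x = log x + Ei x`, the antiderivative of `(1+eˣ)/x`. -/
noncomputable def GG (x : ℝ) : ℝ := Real.log x + expInt x

private lemma GG_hasDerivAt {x : ℝ} (hx : 0 < x) :
    HasDerivAt GG ((1 + Real.exp x) / x) x := by
  have hmeas : Measurable (fun t : ℝ => (Real.exp t - 1) / t) :=
    (Real.measurable_exp.sub measurable_const).div measurable_id
  have hcont : ContinuousAt (fun t : ℝ => (Real.exp t - 1) / t) x :=
    ((Real.continuous_exp.sub continuous_const).continuousAt).div continuousAt_id hx.ne'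
  have hint : HasDerivAt (fun y => ∫ t in (0:ℝ)..y, (Real.exp t - 1) / t)
      ((Real.exp x - 1) / x) x :=
    intervalIntegral.integral_hasDerivAt_right (integrand_intervalIntegrable hx)
      (hmeas.stronglyMeasurable.stronglyMeasurableAtFilter) hcont
  have hlog : HasDerivAt Real.log (1 / x) x := by
    simpa using Real.hasDerivAt_log hx.ne'
  have hEi : HasDerivAt expInt (Real.exp x / x) x := by
    have h' := ((hasDerivAt_const x Real.eulerMascheroniConstant).add hlog).add hint
    have heq : (0 : ℝ) + 1 / x + (Real.exp x - 1) / x = Real.exp x / x := by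
      field_simp
      ring
    exact heq ▸ h'
  have h2 := hlog.add hEi
  have heq : 1 / x + Real.exp x / x = (1 + Real.exp x) / x := by field_simp
  exact heq ▸ h2

private lemma lower_bound {a : ℝ} (ha : 0 < a) {u : ℝ → ℝ}
    (h : ∀ t ≥ (0:ℝ), HasDerivAt u (2 * a * u t / (1 + Real.exp (u t))) t)
    (hpos : 0 < u 0) : ∀ t ≥ (0:ℝ), u 0 ≤ u t := by
  by_contra hc
  push_neg at hc
  obtain ⟨t0, ht0, hlt⟩ := hc
  set B : Set ℝ := {t : ℝ | 0 ≤ t ∧ u t < u 0} with hB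
  have hBne : B.Nonempty := ⟨t0, ht0, hlt⟩
  have hBbd : BddBelow B := ⟨0, fun t ht => ht.1⟩
  set s := sInf B with hs
  have hs0 : 0 ≤ s := le_csInf hBne fun t ht => ht.1
  have hpre : ∀ r, 0 ≤ r → r < s → u 0 ≤ u r := by
    intro r hr hrs
    by_contra hur
    push_neg at hur
    exact absurd (csInf_le hBbd ⟨hr, hur⟩) (not_le.2 hrs)
  have husge : u 0 ≤ u s := by
    rcases eq_or_lt_of_le hs0 with hse | hsp
    · rw [← hse]
    · have hcont : ContinuousAt u s := (h s hs0).continuousAt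
      have htend : Tendsto u (nhdsWithin s (Iio s)) (nhds (u s)) :=
        hcont.continuousWithinAt.tendsto
      refine ge_of_tendsto htend ?_
      filter_upwards [Ioo_mem_nhdsLT_of_mem (⟨hsp, le_refl s⟩ : s ∈ Ioc 0 s)] with r hr
      exact hpre r hr.1.le hr.2
  have hsnotB : s ∉ B := fun hsB => absurd hsB.2 (not_lt.2 husge)
  have hus : 0 < u s := lt_of_lt_of_le hpos husge
  have hd : 0 < 2 * a * u s / (1 + Real.exp (u s)) :=
    div_pos (by nlinarith) (by nlinarith [Real.exp_pos (u s)])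
  have hslope := (hasDerivAt_iff_tendsto_slope.1 (h s hs0))
  have hev : ∀ᶠ t in nhdsWithin s (Ioi s), 0 < slope u s t := by
    have h1 : ∀ᶠ y in nhds (2 * a * u s / (1 + Real.exp (u s))), 0 < y :=
      eventually_gt_nhds hd
    have h2 := hslope.eventually h1
    exact h2.filter_mono (nhdsWithin_mono s fun t ht => Set.mem_compl_singleton_iff.2
      (ne_of_gt ht))
  rw [eventually_iff, mem_nhdsGT_iff_exists_Ioo_subset] at hev
  obtain ⟨c, hc, hsub⟩ := hev
  have hBc : ∀ t ∈ B, c ≤ t := by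
    intro t ht
    by_contra htc
    push_neg at htc
    have hts : s ≤ t := csInf_le hBbd ht
    have htne : t ≠ s := fun he => hsnotB (he ▸ ht)
    have htIoo : t ∈ Ioo s c := ⟨lt_of_le_of_ne hts (Ne.symm htne), htc⟩
    have hsl : 0 < slope u s t := hsub htIoo
    rw [slope_def_field] at hsl
    have hut : 0 < u t - u s := by
      have hts' : 0 < t - s := sub_pos.2 htIoo.1
      have heq : u t - u s = (t - s) * ((u t - u s) / (t - s)) := by
        field_simp
      rw [heq]
      exact mul_pos hts' hsl
    have : u 0 < u t := by linarith
    exact absurd ht.2 (not_lt.2 this.le)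
  have : c ≤ s := le_csInf hBne hBc
  exact absurd hc (not_lt.2 this)

private lemma GG_eq {a : ℝ} (ha : 0 < a) {u : ℝ → ℝ}
    (h : ∀ t ≥ (0:ℝ), HasDerivAt u (2 * a * u t / (1 + Real.exp (u t))) t)
    (hpos : 0 < u 0) : ∀ t ≥ (0:ℝ), GG (u t) = GG (u 0) + 2 * a * t := by
  intro T hT
  have hlb := lower_bound ha h hpos
  have key : ∀ x ∈ Icc (0:ℝ) T, GG (u x) - 2 * a * x = GG (u 0) - 2 * a * 0 := by
    apply constant_of_has_deriv_right_zero
    · intro x hx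
      have hux : 0 < u x := lt_of_lt_of_le hpos (hlb x hx.1)
      exact (((GG_hasDerivAt hux).comp x (h x hx.1)).sub
        ((hasDerivAt_id x).const_mul (2*a))).continuousAt.continuousWithinAt
    · intro x hx
      have hx0 : 0 ≤ x := hx.1
      have hux : 0 < u x := lt_of_lt_of_le hpos (hlb x hx0)
      have hder := ((GG_hasDerivAt hux).comp x (h x hx0)).sub
        ((hasDerivAt_id x).const_mul (2*a))
      have heq : (1 + Real.exp (u x)) / u x * (2 * a * u x / (1 + Real.exp (u x)))
          - 2 * a * 1 = 0 := by
        have hex : (0:ℝ) < 1 + Real.exp (u x) := by positivity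
        field_simp
        ring
      rw [heq] at hder
      exact hder.hasDerivWithinAt
  have := key T ⟨hT, le_refl T⟩
  simp only [mul_zero] at this
  linarith

private lemma GG_strictMonoOn : StrictMonoOn GG (Ioi 0) := by
  apply strictMonoOn_of_deriv_pos (convex_Ioi 0)
  · intro x hx
    exact (GG_hasDerivAt hx).continuousAt.continuousWithinAt
  · intro x hx
    rw [interior_Ioi] at hx
    rw [(GG_hasDerivAt hx).deriv]
    exact div_pos (by nlinarith [Real.exp_pos x]) hx

/-- Comparison/shift property of the cross-entropy logit ODE: the trajectory with
larger initial value stays larger, and the difference in the times to reach a common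
target is the explicit constant `(1/(2a))(log(u₂(0)/u₁(0)) + Ei(u₂(0)) − Ei(u₁(0)))`. -/
theorem stmt_19 (a : ℝ) (ha : 0 < a) (u₁ u₂ : ℝ → ℝ)
    (h1 : ∀ t ≥ (0:ℝ), HasDerivAt u₁ (2 * a * u₁ t / (1 + Real.exp (u₁ t))) t)
    (h2 : ∀ t ≥ (0:ℝ), HasDerivAt u₂ (2 * a * u₂ t / (1 + Real.exp (u₂ t))) t)
    (hpos : 0 < u₁ 0) (hle : u₁ 0 ≤ u₂ 0) :
    (∀ t ≥ (0:ℝ), u₁ t ≤ u₂ t) ∧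
      ∀ uf ≥ u₂ 0, ∀ t₁ ≥ (0:ℝ), ∀ t₂ ≥ (0:ℝ), u₁ t₁ = uf → u₂ t₂ = uf →
        t₁ - t₂ = 1 / (2 * a) *
          (Real.log (u₂ 0 / u₁ 0) + expInt (u₂ 0) - expInt (u₁ 0)) := by
  have hpos2 : 0 < u₂ 0 := lt_of_lt_of_le hpos hle
  have hlb1 := lower_bound ha h1 hpos
  have hlb2 := lower_bound ha h2 hpos2
  have hG1 := GG_eq ha h1 hpos
  have hG2 := GG_eq ha h2 hpos2
  have hG0le : GG (u₁ 0) ≤ GG (u₂ 0) :=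
    GG_strictMonoOn.monotoneOn (mem_Ioi.2 hpos) (mem_Ioi.2 hpos2) hle
  constructor
  · intro t ht
    have hu1 : 0 < u₁ t := lt_of_lt_of_le hpos (hlb1 t ht)
    have hu2 : 0 < u₂ t := lt_of_lt_of_le hpos2 (hlb2 t ht)
    by_contra hc
    push_neg at hc
    have : GG (u₂ t) < GG (u₁ t) := GG_strictMonoOn (mem_Ioi.2 hu2) (mem_Ioi.2 hu1) hc
    rw [hG1 t ht, hG2 t ht] at this
    linarith
  · intro uf _ t₁ ht₁ t₂ ht₂ he1 he2
    have hA := hG1 t₁ ht₁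
    have hB := hG2 t₂ ht₂
    rw [he1] at hA; rw [he2] at hB
    have hkey : 2 * a * t₁ - 2 * a * t₂ = GG (u₂ 0) - GG (u₁ 0) := by linarith
    have hlog : Real.log (u₂ 0 / u₁ 0) = Real.log (u₂ 0) - Real.log (u₁ 0) :=
      Real.log_div hpos2.ne' hpos.ne'
    have hGdef : GG (u₂ 0) - GG (u₁ 0)
        = Real.log (u₂ 0 / u₁ 0) + expInt (u₂ 0) - expInt (u₁ 0) := by
      simp only [GG, hlog]; ring
    rw [hGdef] at hkey
    have ha' : (2 * a) ≠ 0 := ne_of_gt (by linarith)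
    field_simp
    linarith
end
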